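/- Let 𝔤 be a finite-dimensional Lie algebra over a field of characteristic zero admitting a nonsingular (i.e., invertible) derivation. Then 𝔤 is nilpotent. -/

import Mathlib

open Module

section Core

variable {F L : Type*} [Field F] [CharZero F] [LieRing L] [LieAlgebra F L]
  [FiniteDimensional F L]

set_option maxHeartbeats 1000000 in
set_option synthInstance.maxHeartbeats 200000 in
/-- The core graded Engel-type argument. -/
theorem jacobson_core (E : F → Submodule F L)
    (htop : ⨆ α, E α = ⊤) (hind : iSupIndep E) (hzero : E 0 = ⊥)
    (hbr : ∀ α β (x y : L), x ∈ E α → y ∈ E β → ⁅x, y⁆ ∈ E (α + β)) :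
    LieRing.IsNilpotent L := by
  classical
  have hInt : DirectSum.IsInternal E :=
    (DirectSum.isInternal_submodule_iff_iSupIndep_and_iSup_eq_top E).mpr ⟨hind, htop⟩
  letI : DirectSum.Decomposition E := hInt.chooseDecomposition
  have hfin : {α | E α ≠ ⊥}.Finite := WellFoundedGT.finite_ne_bot_of_iSupIndep hind
  -- base case helper: a graded subspace not contained in S contains a homogeneous
  -- element outside S
  have hbase : ∀ M S : Submodule F L,
      (∀ m ∈ M, ∀ β, (DirectSum.decompose E m β : L) ∈ M) → ¬ M ≤ S →
      ∃ (δ : F) (x : L), x ∈ E δ ∧ x ∈ M ∧ x ∉ S := by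
    intro M S hGrM hMS
    obtain ⟨x', hx'M, hx'S⟩ := SetLike.not_le_iff_exists.mp hMS
    by_cases hβ : ∃ β, (DirectSum.decompose E x' β : L) ∉ S
    · obtain ⟨β, hb⟩ := hβ
      exact ⟨β, _, SetLike.coe_mem _, hGrM x' hx'M β, hb⟩
    · push_neg at hβ
      refine absurd ?_ hx'S
      rw [← DirectSum.sum_support_decompose E x']
      exact Submodule.sum_mem S fun β _ => hβ β
  -- The key Engel-type lemma, by induction on the dimension of the graded
  -- subalgebra `H`.
  have ML : ∀ (n : ℕ) (H M S : Submodule F L),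
      (∀ x ∈ H, ∀ y ∈ H, ⁅x, y⁆ ∈ H) →
      (∀ x ∈ H, ∀ β, (DirectSum.decompose E x β : L) ∈ H) →
      (∀ x ∈ H, ∀ m ∈ M, ⁅x, m⁆ ∈ M) →
      (∀ x ∈ H, ∀ s ∈ S, ⁅x, s⁆ ∈ S) →
      (∀ m ∈ M, ∀ β, (DirectSum.decompose E m β : L) ∈ M) →
      ¬ M ≤ S → finrank F H ≤ n →
      ∃ (δ : F) (x : L), x ∈ E δ ∧ x ∈ M ∧ x ∉ S ∧ ∀ h ∈ H, ⁅h, x⁆ ∈ S := by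
    intro n
    induction n with
    | zero =>
      intro H M S _ _ _ _ hGrM hMS hrank
      have hH : H = ⊥ := by
        rw [← Submodule.finrank_eq_zero (R := F) (M := L)]
        omega
      obtain ⟨δ, x, hxE, hxM, hxS⟩ := hbase M S hGrM hMS
      refine ⟨δ, x, hxE, hxM, hxS, ?_⟩
      intro h hh
      rw [hH, Submodule.mem_bot] at hh
      simp [hh]
    | succ n IH =>
      intro H M S halgH hGrH hHM hHS hGrM hMS hrank
      by_cases hHbot : H = ⊥
      · obtain ⟨δ, x, hxE, hxM, hxS⟩ := hbase M S hGrM hMS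
        refine ⟨δ, x, hxE, hxM, hxS, ?_⟩
        intro h hh
        rw [hHbot, Submodule.mem_bot] at hh
        simp [hh]
      · -- find a maximal proper graded subalgebra H' of H
        set 𝒮 : Set (Submodule F L) :=
          {A | (∀ x ∈ A, ∀ y ∈ A, ⁅x, y⁆ ∈ A) ∧
               (∀ x ∈ A, ∀ β, (DirectSum.decompose E x β : L) ∈ A) ∧ A < H} with h𝒮
        have hbot𝒮 : (⊥ : Submodule F L) ∈ 𝒮 := by
          refine ⟨by simp, ?_, bot_lt_iff_ne_bot.mpr (Ne.symm (hHbot ∘ Eq.symm))⟩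
          intro x hx β
          rw [Submodule.mem_bot] at hx
          simp [hx]
        set T : Set ℕ := (fun A : Submodule F L => finrank F A) '' 𝒮 with hT
        have hTne : T.Nonempty := ⟨_, ⟨⊥, hbot𝒮, rfl⟩⟩
        have hTbdd : BddAbove T := by
          refine ⟨finrank F L, ?_⟩
          rintro _ ⟨A, _, rfl⟩
          exact Submodule.finrank_le A
        obtain ⟨H', hH'𝒮, hd⟩ := Nat.sSup_mem hTne hTbdd
        obtain ⟨halgH', hGrH', hH'H⟩ := hH'𝒮
        have hd' : finrank F H' = sSup T := hd
        have hmax : ∀ B ∈ 𝒮, finrank F B ≤ finrank F H' := by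
          intro B hB
          rw [hd']
          exact le_csSup hTbdd ⟨B, hB, rfl⟩
        have hrank' : finrank F H' ≤ n := by
          have := Submodule.finrank_lt_finrank_of_lt hH'H
          omega
        -- get a homogeneous normalizing element y of H' in H
        obtain ⟨δ, y, hyE, hyH, hyH', hynorm⟩ :=
          IH H' H H' halgH' hGrH'
            (fun x hx m hm => halgH x (hH'H.le hx) m hm)
            (fun x hx s hs => halgH' x hx s hs) hGrH hH'H.2 hrank'
        have hy0 : y ≠ 0 := fun h => hyH' (h ▸ H'.zero_mem)
        have hδ0 : δ ≠ 0 := by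
          rintro rfl
          rw [hzero, Submodule.mem_bot] at hyE
          exact hy0 hyE
        -- H = H' ⊔ (F ∙ y)
        have hmemB : ∀ z ∈ H' ⊔ (F ∙ y), ∃ a ∈ H', ∃ c : F, z = a + c • y := by
          intro z hz
          obtain ⟨a, ha, b, hb, rfl⟩ := Submodule.mem_sup.mp hz
          obtain ⟨c, rfl⟩ := Submodule.mem_span_singleton.mp hb
          exact ⟨a, ha, c, rfl⟩
        have hBH : H' ⊔ (F ∙ y) ≤ H :=
          sup_le hH'H.le ((Submodule.span_singleton_le_iff_mem y H).mpr hyH)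
        have hBeq : H' ⊔ (F ∙ y) = H := by
          by_contra hne
          have hBlt : H' ⊔ (F ∙ y) < H := lt_of_le_of_ne hBH hne
          have hB𝒮 : H' ⊔ (F ∙ y) ∈ 𝒮 := by
            refine ⟨?_, ?_, hBlt⟩
            · intro u hu v hv
              obtain ⟨a, ha, c, rfl⟩ := hmemB u hu
              obtain ⟨b, hb, e, rfl⟩ := hmemB v hv
              have h1 : ⁅a, b⁆ ∈ H' := halgH' a ha b hb
              have h2 : ⁅a, y⁆ ∈ H' := hynorm a ha
              have h3 : ⁅y, b⁆ ∈ H' := by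
                have h := H'.neg_mem (hynorm b hb)
                rwa [lie_skew] at h
              refine le_sup_left (α := Submodule F L) ?_
              have hexp : ⁅a + c • y, b + e • y⁆
                  = ⁅a, b⁆ + e • ⁅a, y⁆ + (c • ⁅y, b⁆ + (e * c) • ⁅y, y⁆) := by
                simp only [lie_add, add_lie, smul_lie, lie_smul, smul_add, smul_smul]
                abel
              rw [hexp, lie_self, smul_zero, add_zero]
              exact H'.add_mem (H'.add_mem h1 (H'.smul_mem _ h2)) (H'.smul_mem _ h3)
            · intro u hu β
              obtain ⟨a, ha, c, rfl⟩ := hmemB u hu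
              have hdec : (DirectSum.decompose E (a + c • y) β : L)
                  = (DirectSum.decompose E a β : L)
                    + c • (DirectSum.decompose E y β : L) := by
                rw [DirectSum.decompose_add, DirectSum.decompose_smul,
                  DirectSum.add_apply, DirectSum.smul_apply]
                simp
              rw [hdec]
              refine Submodule.add_mem _ (le_sup_left (α := Submodule F L) (hGrH' a ha β)) ?_
              by_cases hβδ : β = δ
              · subst hβδ
                rw [DirectSum.decompose_of_mem_same E hyE]
                exact Submodule.smul_mem _ _ (le_sup_right (α := Submodule F L)
                  (Submodule.mem_span_singleton_self y))
              · rw [DirectSum.decompose_of_mem_ne E hyE (fun h => hβδ h.symm)]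
                simp
          have := hmax _ hB𝒮
          have hlt : H' < H' ⊔ (F ∙ y) :=
            lt_of_le_of_ne le_sup_left (fun h => hyH' (h ▸ le_sup_right
              (α := Submodule F L) (Submodule.mem_span_singleton_self y)))
          have := Submodule.finrank_lt_finrank_of_lt hlt
          omega
        -- get a homogeneous element of M, outside S, annihilated by H'
        obtain ⟨β, x₀, hx0E, hx0M, hx0S, hx0br⟩ :=
          IH H' M S halgH' hGrH'
            (fun x hx m hm => hHM x (hH'H.le hx) m hm)
            (fun x hx s hs => hHS x (hH'H.le hx) s hs) hGrM hMS hrank'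
        -- iterate ad y on x₀
        set ady : Module.End F L := LieAlgebra.ad F L y with hady
        have hseq : ∀ j : ℕ, ((ady ^ j) x₀ ∈ M) ∧
            (∀ h ∈ H', ⁅h, (ady ^ j) x₀⁆ ∈ S) ∧ ((ady ^ j) x₀ ∈ E (β + (j : F) * δ)) := by
          intro j
          induction j with
          | zero => simpa using ⟨hx0M, hx0br, hx0E⟩
          | succ j ihj =>
            obtain ⟨h1, h2, h3⟩ := ihj
            have hstep : (ady ^ (j + 1)) x₀ = ⁅y, (ady ^ j) x₀⁆ := by
              rw [pow_succ', Module.End.mul_apply, hady, LieAlgebra.ad_apply]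
            refine ⟨?_, ?_, ?_⟩
            · rw [hstep]; exact hHM y hyH _ h1
            · intro h hh
              rw [hstep, leibniz_lie]
              exact S.add_mem (h2 _ (hynorm h hh)) (hHS y hyH _ (h2 h hh))
            · rw [hstep]
              have := hbr δ (β + (j : F) * δ) y _ hyE h3
              have heq : δ + (β + (j : F) * δ) = β + ((j : ℕ) + 1 : F) * δ := by ring
              rw [heq] at this
              simpa using this
        set J : Set ℕ := {j | (ady ^ j) x₀ ∉ S} with hJ
        have h0J : 0 ∈ J := by simpa [hJ] using hx0S
        have hJfin : J.Finite := by
          have hsub : J ⊆ (fun j : ℕ => β + (j : F) * δ) ⁻¹' {γ | E γ ≠ ⊥} := by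
            intro j hj
            have hne : (ady ^ j) x₀ ≠ 0 := fun h => hj (h ▸ S.zero_mem)
            exact fun hbot => hne ((Submodule.mem_bot F).mp (hbot ▸ (hseq j).2.2))
          refine Set.Finite.subset (Set.Finite.preimage ?_ hfin) hsub
          intro a _ b _ hab
          simp only at hab
          have h2 : (a : F) * δ = (b : F) * δ := by
            have h3 := hab
            exact add_left_cancel h3
          have : (a : F) = b := mul_left_injective₀ hδ0 h2
          exact_mod_cast this
        have hNmem : sSup J ∈ J := Nat.sSup_mem ⟨0, h0J⟩ hJfin.bddAbove
        have hN1 : sSup J + 1 ∉ J := fun h => by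
          have := le_csSup hJfin.bddAbove h
          omega
        refine ⟨β + ((sSup J : ℕ) : F) * δ, (ady ^ sSup J) x₀, (hseq _).2.2, (hseq _).1,
          hNmem, ?_⟩
        intro h hh
        rw [← hBeq] at hh
        obtain ⟨a, ha, c, rfl⟩ := hmemB h hh
        rw [add_lie]
        refine S.add_mem ((hseq _).2.1 a ha) ?_
        rw [smul_lie]
        refine S.smul_mem _ ?_
        have : ⁅y, (ady ^ sSup J) x₀⁆ = (ady ^ (sSup J + 1)) x₀ := by
          rw [pow_succ', Module.End.mul_apply, hady, LieAlgebra.ad_apply]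
        rw [this]
        by_contra hc
        exact hN1 hc
  -- build the flag and kill the lower central series
  have flag : ∀ (k : ℕ) (S : Submodule F L), (∀ (u : L), ∀ s ∈ S, ⁅u, s⁆ ∈ S) →
      finrank F L ≤ finrank F S + k →
      ∀ x ∈ LieModule.lowerCentralSeries F L L k, x ∈ S := by
    intro k
    induction k with
    | zero =>
      intro S _ hrank x _
      have : S = ⊤ := Submodule.eq_top_of_finrank_eq (le_antisymm (Submodule.finrank_le S)
        (by simpa using hrank))
      rw [this]; trivial
    | succ k IHk =>
      intro S hS hrank
      by_cases hTS : ⊤ ≤ S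
      · exact fun x _ => hTS trivial
      · obtain ⟨δ, x₀, hxE, -, hxS, hxbr⟩ :=
          ML (finrank F L) ⊤ ⊤ S (fun _ _ _ _ => trivial) (fun _ _ _ => trivial)
            (fun _ _ _ _ => trivial) (fun u _ s hs => hS u s hs) (fun _ _ _ => trivial)
            hTS (by simpa using Submodule.finrank_le (⊤ : Submodule F L))
        set S₂ : Submodule F L := S ⊔ (F ∙ x₀) with hS₂def
        have hmem₂ : ∀ z ∈ S₂, ∃ a ∈ S, ∃ c : F, z = a + c • x₀ := by
          intro z hz
          obtain ⟨a, ha, b, hb, rfl⟩ := Submodule.mem_sup.mp hz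
          obtain ⟨c, rfl⟩ := Submodule.mem_span_singleton.mp hb
          exact ⟨a, ha, c, rfl⟩
        have hS₂strong : ∀ (u : L), ∀ s ∈ S₂, ⁅u, s⁆ ∈ S := by
          intro u s hs
          obtain ⟨a, ha, c, rfl⟩ := hmem₂ s hs
          rw [lie_add, lie_smul]
          exact S.add_mem (hS u a ha) (S.smul_mem _ (hxbr u trivial))
        have hS₂ : ∀ (u : L), ∀ s ∈ S₂, ⁅u, s⁆ ∈ S₂ := by
          intro u s hs
          exact le_sup_left (α := Submodule F L) (hS₂strong u s hs)
        have hlt : S < S₂ := lt_of_le_of_ne le_sup_left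
          (fun h => hxS (h ▸ le_sup_right (α := Submodule F L)
            (Submodule.mem_span_singleton_self x₀)))
        have hrank₂ : finrank F L ≤ finrank F S₂ + k := by
          have := Submodule.finrank_lt_finrank_of_lt hlt
          omega
        intro x hx
        rw [LieModule.lowerCentralSeries_succ] at hx
        have hx' : x ∈ Submodule.span F
            {m | ∃ u ∈ (⊤ : LieIdeal F L),
              ∃ n ∈ LieModule.lowerCentralSeries F L L k, ⁅u, n⁆ = m} := by
          rw [← LieSubmodule.lieIdeal_oper_eq_linear_span']
          exact hx
        refine Submodule.span_induction ?_ (S.zero_mem) (fun u v _ _ hu hv => S.add_mem hu hv)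
          (fun c u _ hu => S.smul_mem c hu) hx'
        rintro m ⟨u, -, nn, hn, rfl⟩
        exact hS₂strong u nn (IHk S₂ hS₂ hrank₂ nn hn)
  refine (LieModule.isNilpotent_iff F L L).mpr ⟨finrank F L, ?_⟩
  rw [LieSubmodule.eq_bot_iff]
  intro m hm
  have := flag (finrank F L) ⊥ (by simp) (by simp) m hm
  simpa using this

end Core

set_option maxHeartbeats 1000000 in
/-- Jacobson's theorem over an algebraically closed field, for a bijective linear
endomorphism satisfying the Leibniz rule. -/
theorem jacobson_algClosed {F L : Type*} [Field F] [CharZero F] [IsAlgClosed F]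
    [LieRing L] [LieAlgebra F L] [FiniteDimensional F L]
    (D : Module.End F L)
    (hleib : ∀ u v : L, D ⁅u, v⁆ = ⁅D u, v⁆ + ⁅u, D v⁆)
    (hbij : Function.Bijective D) : LieRing.IsNilpotent L := by
  classical
  have htop : ⨆ α, D.maxGenEigenspace α = ⊤ := Module.End.iSup_maxGenEigenspace_eq_top D
  have hind : iSupIndep D.maxGenEigenspace := D.independent_maxGenEigenspace
  have hinj : ∀ k : ℕ, Function.Injective ⇑(D ^ k : Module.End F L) := by
    intro k
    induction k with
    | zero => simpa [Module.End.coe_one] using Function.injective_id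
    | succ k ih =>
      intro x y hxy
      have h1 : (D ^ k) (D x) = (D ^ k) (D y) := by
        simpa [pow_succ, Module.End.mul_apply] using hxy
      exact hbij.injective (ih h1)
  have hzero : D.maxGenEigenspace 0 = ⊥ := by
    rw [eq_bot_iff]
    intro x hx
    rw [Module.End.mem_maxGenEigenspace] at hx
    obtain ⟨k, hk⟩ := hx
    rw [zero_smul, sub_zero] at hk
    have : (D ^ k) x = (D ^ k) 0 := by simpa using hk
    simpa using hinj k this
  have hbr : ∀ α β (x y : L), x ∈ D.maxGenEigenspace α → y ∈ D.maxGenEigenspace β →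
      ⁅x, y⁆ ∈ D.maxGenEigenspace (α + β) := by
    intro α β x y hx hy
    rw [Module.End.mem_maxGenEigenspace] at hx hy ⊢
    obtain ⟨a, ha⟩ := hx
    obtain ⟨b, hb⟩ := hy
    set A : Module.End F L := D - α • 1 with hA
    set B : Module.End F L := D - β • 1 with hB
    set C : Module.End F L := D - (α + β) • 1 with hC
    have hCleib : ∀ u v : L, C ⁅u, v⁆ = ⁅A u, v⁆ + ⁅u, B v⁆ := by
      intro u v
      simp only [hA, hB, hC, LinearMap.sub_apply, LinearMap.smul_apply,
        Module.End.one_apply]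
      rw [hleib, sub_lie, lie_sub, smul_lie, lie_smul, add_smul]
      abel
    have key : ∀ n : ℕ, (C ^ n) ⁅x, y⁆ ∈ Submodule.span F
        {z | ∃ i j : ℕ, i + j = n ∧ z = ⁅(A ^ i) x, (B ^ j) y⁆} := by
      intro n
      induction n with
      | zero =>
        refine Submodule.subset_span ⟨0, 0, rfl, ?_⟩
        simp
      | succ n ih =>
        have hstep : (C ^ (n + 1)) ⁅x, y⁆ = C ((C ^ n) ⁅x, y⁆) := by
          rw [pow_succ', Module.End.mul_apply]
        rw [hstep]
        refine Submodule.span_induction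
          (p := fun z _ => C z ∈ Submodule.span F
            {z | ∃ i j : ℕ, i + j = n + 1 ∧ z = ⁅(A ^ i) x, (B ^ j) y⁆}) ?_ ?_ ?_ ?_ ih
        · rintro z ⟨i, j, hij, rfl⟩
          have hsplit : C ⁅(A ^ i) x, (B ^ j) y⁆
              = ⁅(A ^ (i + 1)) x, (B ^ j) y⁆ + ⁅(A ^ i) x, (B ^ (j + 1)) y⁆ := by
            rw [hCleib, pow_succ', pow_succ', Module.End.mul_apply, Module.End.mul_apply]
          rw [hsplit]
          exact Submodule.add_mem _
            (Submodule.subset_span ⟨i + 1, j, by omega, rfl⟩)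
            (Submodule.subset_span ⟨i, j + 1, by omega, rfl⟩)
        · simp
        · intro u v _ _ hu hv
          rw [map_add]
          exact Submodule.add_mem _ hu hv
        · intro c u _ hu
          rw [map_smul]
          exact Submodule.smul_mem _ _ hu
    refine ⟨a + b, ?_⟩
    have hspan : Submodule.span F
        {z | ∃ i j : ℕ, i + j = a + b ∧ z = ⁅(A ^ i) x, (B ^ j) y⁆}
          ≤ (⊥ : Submodule F L) := by
      rw [Submodule.span_le]
      rintro z ⟨i, j, hij, rfl⟩
      simp only [SetLike.mem_coe, Submodule.mem_bot]
      by_cases hia : a ≤ i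
      · have hAx : (A ^ i) x = 0 := by
          rw [show i = (i - a) + a by omega, pow_add, Module.End.mul_apply, ha, map_zero]
        rw [hAx, zero_lie]
      · have hjb : b ≤ j := by omega
        have hBy : (B ^ j) y = 0 := by
          rw [show j = (j - b) + b by omega, pow_add, Module.End.mul_apply, hb, map_zero]
        rw [hBy, lie_zero]
    have hfin := hspan (key (a + b))
    rw [Submodule.mem_bot] at hfin
    exact hfin
  exact jacobson_core D.maxGenEigenspace htop hind hzero hbr

open TensorProduct in
set_option maxHeartbeats 1000000 in
/-- Jacobson: a finite-dimensional Lie algebra over a field of characteristic zero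
admitting a nonsingular (bijective) derivation is nilpotent. -/
theorem nilpotent_of_nonsingular_derivation
    (K : Type*) (L : Type*) [Field K] [CharZero K]
    [LieRing L] [LieAlgebra K L] [FiniteDimensional K L]
    (D : LieDerivation K L L) (hD : Function.Bijective D) :
    LieRing.IsNilpotent L := by
  classical
  let F := AlgebraicClosure K
  haveI : CharZero F := charZero_of_injective_algebraMap (algebraMap K F).injective
  set DF : Module.End F (F ⊗[K] L) := (D : L →ₗ[K] L).baseChange F with hDF
  -- Leibniz rule for the base-changed derivation
  have hleib : ∀ u v : F ⊗[K] L, DF ⁅u, v⁆ = ⁅DF u, v⁆ + ⁅u, DF v⁆ := by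
    intro u v
    induction u using TensorProduct.induction_on with
    | zero => simp
    | tmul a x =>
      induction v using TensorProduct.induction_on with
      | zero => simp
      | tmul b y =>
        rw [LieAlgebra.ExtendScalars.bracket_tmul, hDF, LinearMap.baseChange_tmul,
          LinearMap.baseChange_tmul, LinearMap.baseChange_tmul,
          LieAlgebra.ExtendScalars.bracket_tmul, LieAlgebra.ExtendScalars.bracket_tmul,
          ← TensorProduct.tmul_add]
        congr 1
        rw [LieDerivation.coeFn_coe, D.apply_lie_eq_add, add_comm]
      | add v₁ v₂ h1 h2 =>
        simp only [lie_add, add_lie, map_add, h1, h2]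
        abel
    | add u₁ u₂ h1 h2 =>
      simp only [lie_add, add_lie, map_add, h1, h2]
      abel
  -- bijectivity of the base-changed derivation
  have hbijF : Function.Bijective DF := by
    have hDlin : Function.Bijective ((D : L →ₗ[K] L)) := hD
    let e : L ≃ₗ[K] L := LinearEquiv.ofBijective (D : L →ₗ[K] L) hDlin
    have hcomp1 : ((e.symm : L →ₗ[K] L).comp (D : L →ₗ[K] L)) = LinearMap.id := by
      ext z
      exact e.symm_apply_apply z
    have hcomp2 : ((D : L →ₗ[K] L).comp (e.symm : L →ₗ[K] L)) = LinearMap.id := by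
      ext z
      exact e.apply_symm_apply z
    have h1 : ((e.symm : L →ₗ[K] L).baseChange F).comp DF = LinearMap.id := by
      rw [hDF, ← LinearMap.baseChange_comp, hcomp1, LinearMap.baseChange_id]
    have h2 : DF.comp ((e.symm : L →ₗ[K] L).baseChange F) = LinearMap.id := by
      rw [hDF, ← LinearMap.baseChange_comp, hcomp2, LinearMap.baseChange_id]
    constructor
    · intro x y hxy
      have := LinearMap.congr_fun h1 x
      have h1y := LinearMap.congr_fun h1 y
      simp only [LinearMap.comp_apply, LinearMap.id_apply] at this h1y
      rw [← this, ← h1y, hxy]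
    · intro z
      refine ⟨(e.symm : L →ₗ[K] L).baseChange F z, ?_⟩
      have := LinearMap.congr_fun h2 z
      simpa only [LinearMap.comp_apply, LinearMap.id_apply] using this
  haveI hnilF : LieRing.IsNilpotent (F ⊗[K] L) := jacobson_algClosed DF hleib hbijF
  -- the lower central series commutes with base change
  have hbc : ∀ k : ℕ, (LieModule.lowerCentralSeries K L L k).baseChange F
      = LieModule.lowerCentralSeries F (F ⊗[K] L) (F ⊗[K] L) k := by
    intro k
    induction k with
    | zero =>
      rw [LieModule.lowerCentralSeries_zero, LieModule.lowerCentralSeries_zero]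
      exact LieSubmodule.baseChange_top K F L L
    | succ k ih =>
      rw [LieModule.lowerCentralSeries_succ, LieModule.lowerCentralSeries_succ,
        LieSubmodule.lie_baseChange, ih, LieSubmodule.baseChange_top]
  -- injectivity of x ↦ 1 ⊗ x
  have hone : ∀ x : L, (1 : F) ⊗ₜ[K] x = 0 → x = 0 := by
    intro x hx
    obtain ⟨q, hq⟩ := (K ∙ (1 : F)).exists_isCompl
    have h10 : (1 : F) ≠ 0 := one_ne_zero
    let ι : K ≃ₗ[K] ↥(K ∙ (1 : F)) := LinearEquiv.toSpanNonzeroSingleton K F 1 h10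
    let φ : F →ₗ[K] K := ι.symm.toLinearMap.comp ((K ∙ (1 : F)).linearProjOfIsCompl q hq)
    have hφ1 : φ 1 = 1 := by
      have hproj : (K ∙ (1 : F)).linearProjOfIsCompl q hq (1 : F)
          = ⟨1, Submodule.mem_span_singleton_self 1⟩ := by
        exact Submodule.linearProjOfIsCompl_apply_left hq ⟨1, Submodule.mem_span_singleton_self 1⟩
      have hι : ι (1 : K) = ⟨1, Submodule.mem_span_singleton_self 1⟩ := by
        ext
        simp [ι, LinearEquiv.toSpanNonzeroSingleton]
      simp only [φ, LinearMap.comp_apply, hproj, LinearEquiv.coe_coe]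
      rw [← hι, LinearEquiv.symm_apply_apply]
    have hψ := congrArg ((TensorProduct.lid K L) ∘ (TensorProduct.map φ (LinearMap.id (R := K) (M := L)))) hx
    simpa [TensorProduct.map_tmul, hφ1] using hψ
  -- transfer nilpotency back down
  obtain ⟨n, hn⟩ := LieModule.IsNilpotent.nilpotent F (F ⊗[K] L) (F ⊗[K] L)
  refine (LieModule.isNilpotent_iff K L L).mpr ⟨n, ?_⟩
  rw [LieSubmodule.eq_bot_iff]
  intro m hm
  have h1 : (1 : F) ⊗ₜ[K] m ∈ (LieModule.lowerCentralSeries K L L n).baseChange F :=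
    LieSubmodule.tmul_mem_baseChange_of_mem 1 hm
  rw [hbc n, hn, LieSubmodule.mem_bot] at h1
  exact hone m h1
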